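/- Let X and Z be Banach spaces and T : X → Z an injective bounded linear operator. If T is not bounded below (i.e., there is no α > 0 with α‖x‖ ≤ ‖T x‖ for all x), then the range of the adjoint T* : Z* → X* is contained in a σ-porous subset of X*. -/

import Mathlib

open Filter

/-- `A` is a porous subset of the metric space `α` with porosity constant `c`. -/
def Porous {α : Type*} [PseudoMetricSpace α] (A : Set α) (c : ℝ) : Prop :=
  ∀ a ∈ A, ∃ y : ℕ → α, Tendsto y atTop (nhds a) ∧
    ∀ n, Metric.closedBall (y n) (c * dist (y n) a) ∩ A = ∅

/-- `A` is σ-porous: a countable union of porous sets. -/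
def SigmaPorous {α : Type*} [PseudoMetricSpace α] (A : Set α) : Prop :=
  ∃ P : ℕ → Set α, (∀ n, ∃ c : ℝ, 0 < c ∧ c < 1 ∧ Porous (P n) c) ∧ A = ⋃ n, P n

open NormedSpace in
theorem stmt6 {X Z : Type*} [NormedAddCommGroup X] [NormedSpace ℝ X] [CompleteSpace X]
    [NormedAddCommGroup Z] [NormedSpace ℝ Z] [CompleteSpace Z]
    (T : X →L[ℝ] Z) (hT : Function.Injective T)
    (hnb : ¬ ∃ α : ℝ, 0 < α ∧ ∀ x, α * ‖x‖ ≤ ‖T x‖) :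
    ∃ A : Set (StrongDual ℝ X), SigmaPorous A ∧
      (Set.range fun z' : StrongDual ℝ Z => z'.comp T) ⊆ A := by
  classical
  push_neg at hnb
  -- there are unit vectors with arbitrarily small image
  have hsmall : ∀ ε : ℝ, 0 < ε → ∃ x : X, ‖x‖ = 1 ∧ ‖T x‖ < ε := by
    intro ε hε
    obtain ⟨x, hx⟩ := hnb ε hε
    have hx0 : x ≠ 0 := by
      rintro rfl
      simp at hx
    have hxn : (0:ℝ) < ‖x‖ := norm_pos_iff.2 hx0
    refine ⟨‖x‖⁻¹ • x, ?_, ?_⟩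
    · rw [norm_smul, norm_inv, norm_norm, inv_mul_cancel₀ hxn.ne']
    · rw [map_smul, norm_smul, norm_inv, norm_norm]
      have h1 : ‖x‖⁻¹ * ‖T x‖ < ‖x‖⁻¹ * (ε * ‖x‖) :=
        mul_lt_mul_of_pos_left hx (inv_pos.2 hxn)
      have h2 : ‖x‖⁻¹ * (ε * ‖x‖) = ε := by field_simp
      linarith
  set K : ℕ → Set (StrongDual ℝ X) :=
    fun n => {g | ∃ w : StrongDual ℝ Z, ‖w‖ ≤ (n : ℝ) ∧ g = w.comp T} with hK
  refine ⟨⋃ n, K n, ⟨K, ?_, rfl⟩, ?_⟩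
  · intro n
    refine ⟨1/2, by norm_num, by norm_num, ?_⟩
    rintro a ⟨w, hw, rfl⟩
    -- choose data for each k
    have hdata : ∀ k : ℕ, ∃ p : X × StrongDual ℝ X, ‖p.1‖ = 1 ∧
        ‖T p.1‖ < (1 / (k+1)) / (4 * (n+1)) ∧ ‖p.2‖ = 1 ∧ p.2 p.1 = 1 := by
      intro k
      have hr : (0:ℝ) < (1 / (k+1)) / (4 * (n+1)) := by positivity
      obtain ⟨x, hx1, hx2⟩ := hsmall _ hr
      have hx0 : x ≠ 0 := by
        intro h; rw [h] at hx1; simp at hx1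
      obtain ⟨f, hf1, hf2⟩ := exists_dual_vector ℝ x (norm_ne_zero_iff.2 hx0)
      refine ⟨(x, f), hx1, hx2, hf1, ?_⟩
      simpa [hx1] using hf2
    choose p hp1 hp2 hp3 hp4 using hdata
    set y : ℕ → StrongDual ℝ X := fun k => w.comp T + (1 / (k+1) : ℝ) • (p k).2 with hy
    have hdist : ∀ k, dist (y k) (w.comp T) = 1 / (k+1) := by
      intro k
      have hrpos : (0:ℝ) < 1 / (k+1) := by positivity
      rw [dist_eq_norm]
      simp only [hy, add_sub_cancel_left, norm_smul, hp3, Real.norm_eq_abs,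
        abs_of_pos hrpos, mul_one]
    refine ⟨y, ?_, ?_⟩
    · rw [tendsto_iff_dist_tendsto_zero]
      simp only [hdist]
      exact tendsto_one_div_add_atTop_nhds_zero_nat
    · intro k
      set r : ℝ := 1 / (k+1) with hrdef
      have hrpos : (0:ℝ) < r := by positivity
      rw [Set.eq_empty_iff_forall_notMem]
      rintro u ⟨hu1, ⟨v, hv, rfl⟩⟩
      rw [Metric.mem_closedBall, hdist k] at hu1
      -- evaluation bounds at x := (p k).1
      set x := (p k).1
      have hTx : ‖T x‖ < r / (4 * (n+1)) := hp2 k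
      have hux : |(v.comp T) x| < r / 4 := by
        have h1 : |v (T x)| ≤ ‖v‖ * ‖T x‖ := by
          simpa using v.le_opNorm (T x)
        have h2 : ‖v‖ * ‖T x‖ ≤ (n+1 : ℝ) * ‖T x‖ :=
          mul_le_mul_of_nonneg_right (by linarith) (norm_nonneg _)
        have h3 : (n+1 : ℝ) * ‖T x‖ < (n+1 : ℝ) * (r / (4 * (n+1))) :=
          mul_lt_mul_of_pos_left hTx (by positivity)
        have h4 : (n+1 : ℝ) * (r / (4 * (n+1))) = r / 4 := by
          field_simp
        simp only [ContinuousLinearMap.comp_apply]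
        linarith
      have hax : |(w.comp T) x| < r / 4 := by
        have h1 : |w (T x)| ≤ ‖w‖ * ‖T x‖ := by
          simpa using w.le_opNorm (T x)
        have h2 : ‖w‖ * ‖T x‖ ≤ (n+1 : ℝ) * ‖T x‖ :=
          mul_le_mul_of_nonneg_right (by linarith) (norm_nonneg _)
        have h3 : (n+1 : ℝ) * ‖T x‖ < (n+1 : ℝ) * (r / (4 * (n+1))) :=
          mul_lt_mul_of_pos_left hTx (by positivity)
        have h4 : (n+1 : ℝ) * (r / (4 * (n+1))) = r / 4 := by
          field_simp
        simp only [ContinuousLinearMap.comp_apply]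
        linarith
      have hdiff : |(v.comp T) x - y k x| ≤ r / 2 := by
        have h1 : |(v.comp T - y k) x| ≤ ‖v.comp T - y k‖ * ‖x‖ := by
          simpa using (v.comp T - y k).le_opNorm x
        rw [hp1 k, mul_one] at h1
        have h2 : ‖v.comp T - y k‖ ≤ 1/2 * r := by
          rw [← dist_eq_norm]; exact hu1
        have h3 : (v.comp T - y k) x = (v.comp T) x - y k x := by
          simp
        rw [h3] at h1
        linarith
      have hyval : y k x = (w.comp T) x + r := by
        simp only [hy, ContinuousLinearMap.add_apply, ContinuousLinearMap.smul_apply,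
          hp4 k, smul_eq_mul, mul_one]
        rw [show (p k).2 x = 1 from hp4 k, mul_one]
      rw [hyval] at hdiff
      rw [abs_lt] at hux hax
      rw [abs_le] at hdiff
      obtain ⟨d1, d2⟩ := hdiff
      linarith
  · rintro g ⟨z', rfl⟩
    obtain ⟨n, hn⟩ := exists_nat_ge ‖z'‖
    exact Set.mem_iUnion.2 ⟨n, z', hn, rfl⟩
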